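/- arXiv:0807.4123 — 2 statements merged into one kernel-verified Lean document; each statement's English description precedes it below -/
import Mathlib

section
/- Let V be a commutative unital quantale and Φ a class of V-distributors satisfying (Ax1)–(Ax3). For a V-functor f : (X,a) → (Y,b) the following are equivalent: (i) f is Φ-dense; (ii) Φf : ΦX → ΦY is a left adjoint V-functor; (iii) Φf is Φ-dense. -/
universe u

/-- A commutative unital quantale: a complete lattice with a commutative monoid
structure whose multiplication distributes over arbitrary suprema. -/
class CommQuantale (V : Type u) extends CompleteLattice V, CommMonoid V where
  mul_sSup : ∀ (x : V) (s : Set V), x * sSup s = ⨆ v ∈ s, x * v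

variable {V : Type u} [CommQuantale V]

/-- The internal hom of the quantale: `qhom u v = sSup {w | u * w ≤ v}`. -/
def qhom (u v : V) : V := sSup {w | u * w ≤ v}

theorem mul_iSup' {ι : Sort*} (u : V) (v : ι → V) : u * (⨆ i, v i) = ⨆ i, u * v i := by
  rw [iSup, CommQuantale.mul_sSup, iSup_range]

theorem mul_mono_right' (u : V) {w w' : V} (h : w ≤ w') : u * w ≤ u * w' := by
  have hs : sSup ({w, w'} : Set V) = w' := by
    apply le_antisymm
    · exact sSup_le (by rintro x (rfl | rfl); exacts [h, le_rfl])
    · exact le_sSup (by simp)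
  have hm := CommQuantale.mul_sSup u ({w, w'} : Set V)
  rw [hs] at hm
  rw [hm]
  exact le_iSup₂ (f := fun v (_ : v ∈ ({w, w'} : Set V)) => u * v) w (by simp)

theorem mul_mono_left' {w w' : V} (h : w ≤ w') (u : V) : w * u ≤ w' * u := by
  rw [mul_comm w u, mul_comm w' u]; exact mul_mono_right' u h

theorem le_qhom_iff {u v w : V} : w ≤ qhom u v ↔ u * w ≤ v := by
  constructor
  · intro h
    have h2 : u * qhom u v ≤ v := by
      rw [qhom, CommQuantale.mul_sSup]
      exact iSup₂_le fun w hw => hw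
    exact le_trans (mul_mono_right' u h) h2
  · intro h; exact le_sSup h

theorem bot_mul' (u : V) : (⊥ : V) * u = ⊥ := by
  rw [mul_comm]
  have hm := CommQuantale.mul_sSup u (∅ : Set V)
  simpa using hm

/-- A `V`-category structure on `X`. -/
structure VCatStr (V : Type u) [CommQuantale V] (X : Type u) where
  hom : X → X → V
  refl : ∀ x, (1 : V) ≤ hom x x
  comp : ∀ x y z, hom x y * hom y z ≤ hom x z

/-- `V`-functoriality. -/
def IsVFunctor {X Y : Type u} (a : VCatStr V X) (b : VCatStr V Y) (f : X → Y) : Prop :=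
  ∀ x x', a.hom x x' ≤ b.hom (f x) (f x')

/-- `φ` is a `V`-distributor `(X,a) ⇸ (Y,b)`. -/
def IsDist {X Y : Type u} (a : VCatStr V X) (b : VCatStr V Y) (φ : X → Y → V) : Prop :=
  (∀ x' x y, a.hom x' x * φ x y ≤ φ x' y) ∧ (∀ x y y', φ x y * b.hom y y' ≤ φ x y')

/-- Composite `ψ ∘ φ` of distributors (`φ` first). -/
def dComp {X Y Z : Type u} (ψ : Y → Z → V) (φ : X → Y → V) : X → Z → V :=
  fun x z => ⨆ y, φ x y * ψ y z

/-- The extension `γ ⟜ α`. -/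
def dExt {X Y Z : Type u} (γ : X → Z → V) (α : X → Y → V) : Y → Z → V :=
  fun y z => ⨅ x, qhom (α x y) (γ x z)

/-- `f_*`. -/
def fStar {X Y : Type u} (b : VCatStr V Y) (f : X → Y) : X → Y → V :=
  fun x y => b.hom (f x) y

/-- `f^*`. -/
def fCostar {X Y : Type u} (b : VCatStr V Y) (f : X → Y) : Y → X → V :=
  fun y x => b.hom y (f x)

/-- `ψ ⊣ φ` is an adjunction of distributors, `ψ : (A,α) ⇸ (B,β)`, `φ : (B,β) ⇸ (A,α)`. -/
def DistAdj {A B : Type u} (α : VCatStr V A) (β : VCatStr V B)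
    (ψ : A → B → V) (φ : B → A → V) : Prop :=
  (∀ x x', α.hom x x' ≤ ⨆ y, ψ x y * φ y x') ∧
  (∀ y y', (⨆ x, φ y x * ψ x y') ≤ β.hom y y')

/-- `φ : (B,β) ⇸ (A,α)` is a right adjoint distributor. -/
def IsRightAdjDist {A B : Type u} (β : VCatStr V B) (α : VCatStr V A) (φ : B → A → V) : Prop :=
  ∃ ψ : A → B → V, IsDist α β ψ ∧ DistAdj α β ψ φ

/-- The pointwise order on `V`-functors. -/
def VLe {X Y : Type u} (b : VCatStr V Y) (f g : X → Y) : Prop :=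
  ∀ x, (1 : V) ≤ b.hom (f x) (g x)

/-- Equivalence of `V`-functors. -/
def VEquiv {X Y : Type u} (b : VCatStr V Y) (f g : X → Y) : Prop :=
  VLe b f g ∧ VLe b g f

def FullyFaithful {X Y : Type u} (a : VCatStr V X) (b : VCatStr V Y) (f : X → Y) : Prop :=
  ∀ x x', b.hom (f x) (f x') = a.hom x x'

def DenseF {X Y : Type u} (b : VCatStr V Y) (f : X → Y) : Prop :=
  ∀ y y', (⨆ x, b.hom y (f x) * b.hom (f x) y') = b.hom y y'

/-- `f` is a left adjoint `V`-functor. -/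
def LeftAdjointF {X Y : Type u} (a : VCatStr V X) (b : VCatStr V Y) (f : X → Y) : Prop :=
  ∃ g : Y → X, IsVFunctor b a g ∧ (∀ x, (1 : V) ≤ a.hom x (g (f x))) ∧
    (∀ y, (1 : V) ≤ b.hom (f (g y)) y)

/-- The one-point `V`-category `G`. -/
def unitCat (V : Type u) [CommQuantale V] : VCatStr V PUnit where
  hom _ _ := 1
  refl _ := le_refl 1
  comp _ _ _ := (one_mul 1).le

/-- Presheaves on `(X,a)`: distributors `(X,a) ⇸ G`. -/
def IsPresheaf {X : Type u} (a : VCatStr V X) (ψ : X → V) : Prop :=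
  ∀ x' x, a.hom x' x * ψ x ≤ ψ x'

/-- A class of `V`-distributors: for each pair of `V`-categories a predicate on maps. -/
def DistClass (V : Type u) [CommQuantale V] : Type (u + 1) :=
  ∀ ⦃X Y : Type u⦄, VCatStr V X → VCatStr V Y → (X → Y → V) → Prop

/-- The presheaf `ψ`, seen as distributor into `G`, lies in `Φ`. -/
def InPhi (Φ : DistClass V) {X : Type u} (a : VCatStr V X) (ψ : X → V) : Prop :=
  Φ a (unitCat V) (fun x _ => ψ x)

/-- Axioms (Ax1)–(Ax3) on a class of distributors. -/
structure DistAx (Φ : DistClass V) : Prop where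
  ax1 : ∀ {X Y : Type u} (a : VCatStr V X) (b : VCatStr V Y) (f : X → Y),
      IsVFunctor a b f → Φ b a (fCostar b f)
  ax2_left : ∀ {W X Y : Type u} (d : VCatStr V W) (a : VCatStr V X) (b : VCatStr V Y)
      (φ : W → Y → V) (f : X → Y), IsDist d b φ → IsVFunctor a b f → Φ d b φ →
      Φ d a (dComp (fCostar b f) φ)
  ax2_right : ∀ {X Y Z : Type u} (a : VCatStr V X) (b : VCatStr V Y) (c : VCatStr V Z)
      (φ : X → Z → V) (f : X → Y), IsDist a c φ → IsVFunctor a b f → Φ a c φ →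
      Φ b c (dComp φ (fCostar b f))
  ax2_star : ∀ {W X Z : Type u} (d : VCatStr V W) (a : VCatStr V X) (c : VCatStr V Z)
      (φ : X → Z → V) (f : W → X), IsDist a c φ → IsVFunctor d a f → Φ a c φ →
      Φ d a (fStar a f) → Φ d c (dComp φ (fStar a f))
  ax3 : ∀ {X Y : Type u} (a : VCatStr V X) (b : VCatStr V Y) (φ : X → Y → V),
      IsDist a b φ → (∀ y, Φ a (unitCat V) (fun x _ => φ x y)) → Φ a b φ

/-- Axiom (Ax4): `f_* ∈ Φ` for every surjective `V`-functor `f`. -/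
def Ax4 (Φ : DistClass V) : Prop :=
  ∀ {X Y : Type u} (a : VCatStr V X) (b : VCatStr V Y) (f : X → Y),
    IsVFunctor a b f → Function.Surjective f → Φ a b (fStar b f)

/-- `f` is `Φ`-dense. -/
def PhiDense (Φ : DistClass V) {X Y : Type u} (a : VCatStr V X) (b : VCatStr V Y)
    (f : X → Y) : Prop :=
  Φ a b (fStar b f)

/-- The `V`-category structure on `X → V`. -/
def funCat (V : Type u) [CommQuantale V] (X : Type u) : VCatStr V (X → V) where
  hom ψ ψ' := ⨅ x, qhom (ψ x) (ψ' x)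
  refl ψ := le_iInf fun x => le_qhom_iff.mpr (mul_one _).le
  comp ψ χ ω := le_iInf fun x => le_qhom_iff.mpr <| by
    calc ψ x * ((⨅ x', qhom (ψ x') (χ x')) * (⨅ x', qhom (χ x') (ω x')))
        = (ψ x * (⨅ x', qhom (ψ x') (χ x'))) * (⨅ x', qhom (χ x') (ω x')) :=
          (mul_assoc _ _ _).symm
      _ ≤ χ x * (⨅ x', qhom (χ x') (ω x')) :=
          mul_mono_left' (le_qhom_iff.mp (iInf_le (fun x' => qhom (ψ x') (χ x')) x)) _
      _ ≤ ω x := le_qhom_iff.mp (iInf_le (fun x' => qhom (χ x') (ω x')) x)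

/-- Full sub-`V`-category on a predicate. -/
def subCat {X : Type u} (a : VCatStr V X) (P : X → Prop) : VCatStr V {x : X // P x} where
  hom x y := a.hom x.1 y.1
  refl x := a.refl x.1
  comp x y z := a.comp x.1 y.1 z.1

/-- Carrier of the presheaf `V`-category `PX`. -/
def PCarrier {X : Type u} (a : VCatStr V X) : Type u := {ψ : X → V // IsPresheaf a ψ}

/-- The presheaf `V`-category `PX`. -/
def pCat {X : Type u} (a : VCatStr V X) : VCatStr V (PCarrier a) :=
  subCat (funCat V X) (IsPresheaf a)

/-- Carrier of `ΦX`: presheaves lying in `Φ`. -/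
def PhiCarrier (Φ : DistClass V) {X : Type u} (a : VCatStr V X) : Type u :=
  {ψ : X → V // IsPresheaf a ψ ∧ InPhi Φ a ψ}

/-- The `V`-category `ΦX`. -/
def phiCat (Φ : DistClass V) {X : Type u} (a : VCatStr V X) : VCatStr V (PhiCarrier Φ a) :=
  subCat (funCat V X) fun ψ => IsPresheaf a ψ ∧ InPhi Φ a ψ

/-- The inclusion `ΦX → PX`. -/
def phiIncl (Φ : DistClass V) {X : Type u} (a : VCatStr V X) : PhiCarrier Φ a → PCarrier a :=
  fun ψ => ⟨ψ.1, ψ.2.1⟩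

/-- The corestricted Yoneda functor `y^Φ_X : X → ΦX`. -/
def yPhi (Φ : DistClass V) (hΦ : DistAx Φ) {X : Type u} (a : VCatStr V X) (x : X) :
    PhiCarrier Φ a :=
  ⟨fun x' => a.hom x' x,
   fun x' x'' => a.comp x' x'' x,
   hΦ.ax1 (unitCat V) a (fun _ => x) (fun _ _ => a.refl x)⟩

/-- `Φf : ΦX → ΦY`, `ψ ↦ ψ ∘ f^*`. -/
def phiMap (Φ : DistClass V) (hΦ : DistAx Φ) {X Y : Type u} (a : VCatStr V X) (b : VCatStr V Y)
    (f : X → Y) (hf : IsVFunctor a b f) (ψ : PhiCarrier Φ a) : PhiCarrier Φ b :=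
  ⟨fun y => ⨆ x, b.hom y (f x) * ψ.1 x,
   by
    intro y' y
    rw [mul_iSup']
    refine iSup_le fun x => ?_
    refine le_trans ?_ (le_iSup _ x)
    calc b.hom y' y * (b.hom y (f x) * ψ.1 x)
        = (b.hom y' y * b.hom y (f x)) * ψ.1 x := (mul_assoc _ _ _).symm
      _ ≤ b.hom y' (f x) * ψ.1 x := mul_mono_left' (b.comp y' y (f x)) _,
   by
    have hd : IsDist a (unitCat V) (fun x (_ : PUnit) => ψ.1 x) :=
      ⟨fun x' x _ => ψ.2.1 x' x, fun x _ _ => le_of_eq (mul_one _)⟩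
    exact hΦ.ax2_right a b (unitCat V) _ f hd hf ψ.2.2⟩

/-- `g` is the `φ`-weighted colimit of `h`, i.e. `g_* = h_* ⟜ φ`. -/
def IsColimit {Y Z X : Type u} (_b : VCatStr V Y) (_c : VCatStr V Z) (a : VCatStr V X)
    (φ : Y → Z → V) (h : Y → X) (g : Z → X) : Prop :=
  ∀ z x, a.hom (g z) x = ⨅ y, qhom (φ y z) (a.hom (h y) x)

/-- `Φ`-cocompleteness. -/
def PhiCocomplete (Φ : DistClass V) {X : Type u} (a : VCatStr V X) : Prop :=
  ∀ ⦃Y Z : Type u⦄ (b : VCatStr V Y) (c : VCatStr V Z) (φ : Y → Z → V) (h : Y → X),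
    IsDist b c φ → Φ b c φ → IsVFunctor b a h →
    ∃ g : Z → X, IsVFunctor c a g ∧ IsColimit b c a φ h g

/-- `Φ`-cocontinuity. -/
def PhiCocontinuous (Φ : DistClass V) {X X' : Type u} (a : VCatStr V X) (a' : VCatStr V X')
    (f : X → X') : Prop :=
  ∀ ⦃Y Z : Type u⦄ (b : VCatStr V Y) (c : VCatStr V Z) (φ : Y → Z → V) (h : Y → X) (g : Z → X),
    IsDist b c φ → Φ b c φ → IsVFunctor b a h → IsVFunctor c a g →
    IsColimit b c a φ h g → IsColimit b c a' φ (f ∘ h) (f ∘ g)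

/-- `Φ`-injectivity. -/
def PhiInjective (Φ : DistClass V) {X : Type u} (a : VCatStr V X) : Prop :=
  ∀ ⦃A B : Type u⦄ (α : VCatStr V A) (β : VCatStr V B) (f : A → X) (i : A → B),
    IsVFunctor α a f → IsVFunctor α β i → FullyFaithful α β i → PhiDense Φ α β i →
    ∃ g : B → X, IsVFunctor β a g ∧ VEquiv a (g ∘ i) f

/-- Separatedness. -/
def Separated {X : Type u} (a : VCatStr V X) : Prop :=
  ∀ ⦃Y : Type u⦄ (b : VCatStr V Y) (f g : Y → X),
    IsVFunctor b a f → IsVFunctor b a g → VEquiv a f g → f = g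

section Aux

theorem mul_le_mul'' {u u' w w' : V} (h1 : u ≤ u') (h2 : w ≤ w') : u * w ≤ u' * w' :=
  le_trans (mul_mono_left' h1 w) (mul_mono_right' u' h2)

theorem iSup_mul' {ι : Sort*} (u : V) (v : ι → V) : (⨆ i, v i) * u = ⨆ i, v i * u := by
  rw [mul_comm, mul_iSup']; simp [mul_comm]

theorem qhom_antitone {u u' v : V} (h : u ≤ u') : qhom u' v ≤ qhom u v :=
  le_qhom_iff.mpr (le_trans (mul_mono_left' h _) (le_qhom_iff.mp le_rfl))

theorem one_qhom (v : V) : qhom (1 : V) v = v :=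
  le_antisymm (by have := le_qhom_iff.mp (le_refl (qhom (1:V) v)); rwa [one_mul] at this)
    (le_qhom_iff.mpr (one_mul v).le)

/-- Yoneda lemma. -/
theorem yoneda {X : Type u} {a : VCatStr V X} {ψ : X → V} (hψ : IsPresheaf a ψ) (x : X) :
    (⨅ x', qhom (a.hom x' x) (ψ x')) = ψ x := by
  apply le_antisymm
  · exact le_trans (iInf_le _ x) (le_trans (qhom_antitone (a.refl x)) (one_qhom _).le)
  · exact le_iInf fun x' => le_qhom_iff.mpr (hψ x' x)

theorem sup_absorb {Y : Type u} {b : VCatStr V Y} {ψ : Y → V} (hψ : IsPresheaf b ψ) (y0 : Y) :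
    (⨆ y, b.hom y0 y * ψ y) = ψ y0 := by
  apply le_antisymm
  · exact iSup_le fun y => hψ y0 y
  · calc ψ y0 = 1 * ψ y0 := (one_mul _).symm
      _ ≤ b.hom y0 y0 * ψ y0 := mul_mono_left' (b.refl y0) _
      _ ≤ _ := le_iSup (fun y => b.hom y0 y * ψ y) y0

theorem isDist_fStar {X Y : Type u} {a : VCatStr V X} {b : VCatStr V Y} {f : X → Y}
    (hf : IsVFunctor a b f) : IsDist a b (fStar b f) := by
  constructor
  · intro x' x y
    calc a.hom x' x * b.hom (f x) y ≤ b.hom (f x') (f x) * b.hom (f x) y :=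
        mul_mono_left' (hf x' x) _
      _ ≤ b.hom (f x') y := b.comp _ _ _
  · intro x y y'; exact b.comp _ _ _

theorem isDist_fCostar {X Y : Type u} {a : VCatStr V X} {b : VCatStr V Y} {f : X → Y}
    (hf : IsVFunctor a b f) : IsDist b a (fCostar b f) := by
  constructor
  · intro y' y x; exact b.comp _ _ _
  · intro y x x'
    calc b.hom y (f x) * a.hom x x' ≤ b.hom y (f x) * b.hom (f x) (f x') :=
        mul_mono_right' _ (hf x x')
      _ ≤ b.hom y (f x') := b.comp _ _ _

theorem isDist_dComp {X Y Z : Type u} {a : VCatStr V X} {b : VCatStr V Y} {c : VCatStr V Z}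
    {φ : X → Y → V} {ψ : Y → Z → V} (hφ : IsDist a b φ) (hψ : IsDist b c ψ) :
    IsDist a c (dComp ψ φ) := by
  constructor
  · intro x' x z
    rw [dComp, mul_iSup']
    refine iSup_le fun y => le_trans ?_ (le_iSup _ y)
    calc a.hom x' x * (φ x y * ψ y z) = (a.hom x' x * φ x y) * ψ y z := (mul_assoc _ _ _).symm
      _ ≤ φ x' y * ψ y z := mul_mono_left' (hφ.1 x' x y) _
  · intro x z z'
    rw [dComp, iSup_mul']
    refine iSup_le fun y => le_trans ?_ (le_iSup (fun y => φ x y * ψ y z') y)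
    calc φ x y * ψ y z * c.hom z z' = φ x y * (ψ y z * c.hom z z') := mul_assoc _ _ _
      _ ≤ φ x y * ψ y z' := mul_mono_right' _ (hψ.2 y z z')

theorem phiCat_hom (Φ : DistClass V) {X : Type u} (a : VCatStr V X)
    (ψ ψ' : PhiCarrier Φ a) :
    (phiCat Φ a).hom ψ ψ' = ⨅ x, qhom (ψ.1 x) (ψ'.1 x) := rfl

theorem yPhi_functor (Φ : DistClass V) (hΦ : DistAx Φ) {X : Type u} (a : VCatStr V X) :
    IsVFunctor a (phiCat Φ a) (yPhi Φ hΦ a) := by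
  intro x x'
  rw [phiCat_hom]
  exact le_iInf fun x'' => le_qhom_iff.mpr (a.comp x'' x x')

theorem phiMap_functor (Φ : DistClass V) (hΦ : DistAx Φ) {X Y : Type u}
    (a : VCatStr V X) (b : VCatStr V Y) (f : X → Y) (hf : IsVFunctor a b f) :
    IsVFunctor (phiCat Φ a) (phiCat Φ b) (phiMap Φ hΦ a b f hf) := by
  intro ψ ψ'
  rw [phiCat_hom, phiCat_hom]
  refine le_iInf fun y => le_qhom_iff.mpr ?_
  show (⨆ x, b.hom y (f x) * ψ.1 x) * _ ≤ ⨆ x, b.hom y (f x) * ψ'.1 x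
  rw [iSup_mul']
  refine iSup_le fun x => le_trans ?_ (le_iSup (fun x => b.hom y (f x) * ψ'.1 x) x)
  calc b.hom y (f x) * ψ.1 x * (⨅ x', qhom (ψ.1 x') (ψ'.1 x'))
      = b.hom y (f x) * (ψ.1 x * ⨅ x', qhom (ψ.1 x') (ψ'.1 x')) := mul_assoc _ _ _
    _ ≤ b.hom y (f x) * ψ'.1 x := by
        refine mul_mono_right' _ ?_
        exact le_qhom_iff.mp (iInf_le (fun x' => qhom (ψ.1 x') (ψ'.1 x')) x)

theorem phiMap_yPhi (Φ : DistClass V) (hΦ : DistAx Φ) {X Y : Type u}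
    (a : VCatStr V X) (b : VCatStr V Y) (f : X → Y) (hf : IsVFunctor a b f) (x : X) :
    (phiMap Φ hΦ a b f hf (yPhi Φ hΦ a x)).1 = fun y' => b.hom y' (f x) := by
  funext y'
  show (⨆ x', b.hom y' (f x') * a.hom x' x) = b.hom y' (f x)
  apply le_antisymm
  · refine iSup_le fun x' => ?_
    calc b.hom y' (f x') * a.hom x' x ≤ b.hom y' (f x') * b.hom (f x') (f x) :=
        mul_mono_right' _ (hf x' x)
      _ ≤ b.hom y' (f x) := b.comp _ _ _
  · calc b.hom y' (f x) = b.hom y' (f x) * 1 := (mul_one _).symm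
      _ ≤ b.hom y' (f x) * a.hom x x := mul_mono_right' _ (a.refl x)
      _ ≤ _ := le_iSup (fun x' => b.hom y' (f x') * a.hom x' x) x

theorem adj_hom {A B : Type u} (α : VCatStr V A) (β : VCatStr V B) (h : A → B) (g : B → A)
    (hh : IsVFunctor α β h) (hg : IsVFunctor β α g)
    (unit : ∀ x, (1 : V) ≤ α.hom x (g (h x))) (counit : ∀ y, (1 : V) ≤ β.hom (h (g y)) y) :
    ∀ x y, β.hom (h x) y = α.hom x (g y) := by
  intro x y
  apply le_antisymm
  · calc β.hom (h x) y = 1 * β.hom (h x) y := (one_mul _).symm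
      _ ≤ α.hom x (g (h x)) * α.hom (g (h x)) (g y) := mul_le_mul'' (unit x) (hg _ _)
      _ ≤ α.hom x (g y) := α.comp _ _ _
  · calc α.hom x (g y) = α.hom x (g y) * 1 := (mul_one _).symm
      _ ≤ β.hom (h x) (h (g y)) * β.hom (h (g y)) y := mul_le_mul'' (hh _ _) (counit y)
      _ ≤ β.hom (h x) y := β.comp _ _ _

/-- The Yoneda functor is `Φ`-dense. -/
theorem yPhi_dense (Φ : DistClass V) (hΦ : DistAx Φ) {X : Type u} (a : VCatStr V X) :
    Φ a (phiCat Φ a) (fStar (phiCat Φ a) (yPhi Φ hΦ a)) := by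
  apply hΦ.ax3 a (phiCat Φ a) _ (isDist_fStar (yPhi_functor Φ hΦ a))
  intro ψ
  have heq : (fun x (_ : PUnit) => fStar (phiCat Φ a) (yPhi Φ hΦ a) x ψ)
      = fun x _ => ψ.1 x := by
    funext x u
    show (⨅ x', qhom (a.hom x' x) (ψ.1 x')) = ψ.1 x
    exact yoneda ψ.2.1 x
  rw [heq]
  exact ψ.2.2

end Aux

/-- `f` is `Φ`-dense iff `Φf` is a left adjoint iff `Φf` is `Φ`-dense. -/
theorem stmt10 (Φ : DistClass V) (hΦ : DistAx Φ) {X Y : Type u}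
    (a : VCatStr V X) (b : VCatStr V Y) (f : X → Y) (hf : IsVFunctor a b f) :
    List.TFAE [
      PhiDense Φ a b f,
      LeftAdjointF (phiCat Φ a) (phiCat Φ b) (phiMap Φ hΦ a b f hf),
      PhiDense Φ (phiCat Φ a) (phiCat Φ b) (phiMap Φ hΦ a b f hf)] := by
  set F := phiMap Φ hΦ a b f hf with hF
  set yX := yPhi Φ hΦ a with hyX
  set yY := yPhi Φ hΦ b with hyY
  tfae_have 1 → 2 := by
    intro hd
    -- right adjoint: restriction along f
    refine ⟨fun ψ => ⟨fun x => ψ.1 (f x), ?_, ?_⟩, ?_, ?_, ?_⟩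
    · intro x' x
      calc a.hom x' x * ψ.1 (f x) ≤ b.hom (f x') (f x) * ψ.1 (f x) :=
          mul_mono_left' (hf x' x) _
        _ ≤ ψ.1 (f x') := ψ.2.1 (f x') (f x)
    · have h := hΦ.ax2_star a b (unitCat V) (fun y (_ : PUnit) => ψ.1 y) f
        ⟨fun y' y _ => ψ.2.1 y' y, fun y _ _ => (mul_one _).le⟩ hf ψ.2.2 hd
      have heq : dComp (fun y (_ : PUnit) => ψ.1 y) (fStar b f)
          = fun x (_ : PUnit) => ψ.1 (f x) := by
        funext x u
        exact sup_absorb ψ.2.1 (f x)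
      rwa [heq] at h
    · -- g is a functor
      intro ψ ψ'
      show (⨅ y, qhom (ψ.1 y) (ψ'.1 y)) ≤ ⨅ x, qhom (ψ.1 (f x)) (ψ'.1 (f x))
      exact le_iInf fun x => iInf_le _ (f x)
    · -- unit
      intro ψ
      show (1 : V) ≤ ⨅ x, qhom (ψ.1 x) ((F ψ).1 (f x))
      refine le_iInf fun x => le_qhom_iff.mpr ?_
      rw [mul_one]
      show ψ.1 x ≤ ⨆ x', b.hom (f x) (f x') * ψ.1 x'
      calc ψ.1 x = 1 * ψ.1 x := (one_mul _).symm
        _ ≤ b.hom (f x) (f x) * ψ.1 x := mul_mono_left' (b.refl (f x)) _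
        _ ≤ _ := le_iSup (fun x' => b.hom (f x) (f x') * ψ.1 x') x
    · -- counit
      intro ψ
      rw [phiCat_hom]
      refine le_iInf fun y => le_qhom_iff.mpr ?_
      rw [mul_one]
      show (⨆ x, b.hom y (f x) * ψ.1 (f x)) ≤ ψ.1 y
      exact iSup_le fun x => ψ.2.1 y (f x)
  tfae_have 2 → 3 := by
    rintro ⟨g, hg, hunit, hcounit⟩
    have hFfun := phiMap_functor Φ hΦ a b f hf
    have hadj := adj_hom (phiCat Φ a) (phiCat Φ b) F g hFfun hg hunit hcounit
    have heq : fStar (phiCat Φ b) F = fCostar (phiCat Φ a) g := by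
      funext ψ ψ'
      exact hadj ψ ψ'
    rw [PhiDense, heq]
    exact hΦ.ax1 (phiCat Φ b) (phiCat Φ a) g hg
  tfae_have 3 → 1 := by
    intro h3
    have hFfun := phiMap_functor Φ hΦ a b f hf
    have hθd : IsDist (phiCat Φ a) (phiCat Φ b) (fStar (phiCat Φ b) F) :=
      isDist_fStar hFfun
    have hyYfun := yPhi_functor Φ hΦ b
    -- μ = yY^* ∘ (Φf)_*
    set μ := dComp (fCostar (phiCat Φ b) yY) (fStar (phiCat Φ b) F) with hμ
    have step1 : Φ (phiCat Φ a) b μ :=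
      hΦ.ax2_left (phiCat Φ a) b (phiCat Φ b) (fStar (phiCat Φ b) F) yY hθd hyYfun h3
    have hμd : IsDist (phiCat Φ a) b μ :=
      isDist_dComp hθd (isDist_fCostar hyYfun)
    have step2 : Φ a b (dComp μ (fStar (phiCat Φ a) yX)) :=
      hΦ.ax2_star a (phiCat Φ a) b μ yX hμd (yPhi_functor Φ hΦ a) step1
        (yPhi_dense Φ hΦ a)
    have hFyx : ∀ (x : X) (y0 : Y), (phiCat Φ b).hom (F (yX x)) (yY y0) = b.hom (f x) y0 := by
      intro x y0
      show (⨅ y', qhom ((F (yX x)).1 y') ((yY y0).1 y')) = _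
      rw [phiMap_yPhi Φ hΦ a b f hf x]
      exact yoneda (fun y' y'' => b.comp y' y'' y0) (f x)
    have heq : dComp μ (fStar (phiCat Φ a) yX) = fStar b f := by
      funext x y
      show (⨆ ψ, (phiCat Φ a).hom (yX x) ψ * μ ψ y) = b.hom (f x) y
      apply le_antisymm
      · refine iSup_le fun ψ => ?_
        show (phiCat Φ a).hom (yX x) ψ *
          (⨆ ψ', (phiCat Φ b).hom (F ψ) ψ' * (phiCat Φ b).hom ψ' (yY y)) ≤ _
        rw [mul_iSup']
        refine iSup_le fun ψ' => ?_
        calc (phiCat Φ a).hom (yX x) ψ *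
              ((phiCat Φ b).hom (F ψ) ψ' * (phiCat Φ b).hom ψ' (yY y))
            ≤ (phiCat Φ b).hom (F (yX x)) (F ψ) *
              ((phiCat Φ b).hom (F ψ) ψ' * (phiCat Φ b).hom ψ' (yY y)) :=
            mul_mono_left' (hFfun (yX x) ψ) _
          _ = ((phiCat Φ b).hom (F (yX x)) (F ψ) * (phiCat Φ b).hom (F ψ) ψ') *
              (phiCat Φ b).hom ψ' (yY y) := (mul_assoc _ _ _).symm
          _ ≤ (phiCat Φ b).hom (F (yX x)) ψ' * (phiCat Φ b).hom ψ' (yY y) :=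
            mul_mono_left' ((phiCat Φ b).comp _ _ _) _
          _ ≤ (phiCat Φ b).hom (F (yX x)) (yY y) := (phiCat Φ b).comp _ _ _
          _ = b.hom (f x) y := hFyx x y
      · calc b.hom (f x) y = 1 * (1 * b.hom (f x) y) := by rw [one_mul, one_mul]
          _ ≤ (phiCat Φ a).hom (yX x) (yX x) *
              ((phiCat Φ b).hom (F (yX x)) (F (yX x)) * b.hom (f x) y) :=
            mul_le_mul'' ((phiCat Φ a).refl (yX x))
              (mul_le_mul'' ((phiCat Φ b).refl (F (yX x))) le_rfl)
          _ = (phiCat Φ a).hom (yX x) (yX x) *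
              ((phiCat Φ b).hom (F (yX x)) (F (yX x)) *
               (phiCat Φ b).hom (F (yX x)) (yY y)) := by rw [hFyx]
          _ ≤ (phiCat Φ a).hom (yX x) (yX x) *
              (⨆ ψ', (phiCat Φ b).hom (F (yX x)) ψ' * (phiCat Φ b).hom ψ' (yY y)) :=
            mul_mono_right' _
              (le_iSup (fun ψ' => (phiCat Φ b).hom (F (yX x)) ψ' *
                (phiCat Φ b).hom ψ' (yY y)) (F (yX x)))
          _ ≤ _ := le_iSup (fun ψ => (phiCat Φ a).hom (yX x) ψ * μ ψ y) (yX x)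
    rw [PhiDense, ← heq]
    exact step2
  tfae_finish
end

section
/- Let V be a commutative unital quantale, Φ a class of V-distributors satisfying (Ax1)–(Ax3), and f : (X,a) → (Y,b) a V-functor between Φ-cocomplete V-categories, with Sup^Φ_X : ΦX → X and Sup^Φ_Y : ΦY → Y left adjoint left inverses of y^Φ_X and y^Φ_Y respectively. Then f is Φ-cocontinuous if and only if f ∘ Sup^Φ_X ≅ Sup^Φ_Y ∘ Φf. -/
universe u

variable {V : Type u} [CommQuantale V]

theorem qhom_mul_le' (u v : V) : u * qhom u v ≤ v := le_qhom_iff.mp le_rfl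

theorem qhom_anti' {u u' : V} (h : u ≤ u') (v : V) : qhom u' v ≤ qhom u v :=
  le_qhom_iff.mpr (le_trans (mul_mono_left' h _) (qhom_mul_le' u' v))

/-- The key "sandwich" computation for weighted limits of presheaves. -/
theorem sandwich' {X I : Type u} (r : X → I → V) (B : I → V) (T : X → V) (m : I → X)
    (h1 : ∀ i, (1 : V) ≤ r (m i) i) (h2 : ∀ x i, r x i * T (m i) ≤ T x) :
    (⨅ x, qhom (⨆ i, r x i * B i) (T x)) = ⨅ i, qhom (B i) (T (m i)) := by
  apply le_antisymm
  · refine le_iInf fun i => le_trans (iInf_le _ (m i)) (qhom_anti' ?_ _)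
    calc B i = 1 * B i := (one_mul _).symm
      _ ≤ r (m i) i * B i := mul_mono_left' (h1 i) _
      _ ≤ ⨆ i', r (m i) i' * B i' := le_iSup (fun i' => r (m i) i' * B i') i
  · refine le_iInf fun x => le_qhom_iff.mpr ?_
    rw [iSup_mul']
    refine iSup_le fun i => ?_
    calc (r x i * B i) * (⨅ i', qhom (B i') (T (m i')))
        = r x i * (B i * (⨅ i', qhom (B i') (T (m i')))) := mul_assoc _ _ _
      _ ≤ r x i * (B i * qhom (B i) (T (m i))) :=
          mul_mono_right' _ (mul_mono_right' _ (iInf_le _ i))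
      _ ≤ r x i * T (m i) := mul_mono_right' _ (qhom_mul_le' _ _)
      _ ≤ T x := h2 x i

theorem hom_eq_of_equiv' {X : Type u} (a : VCatStr V X) {u u' : X}
    (h1 : (1 : V) ≤ a.hom u u') (h2 : (1 : V) ≤ a.hom u' u) (x : X) :
    a.hom u x = a.hom u' x := by
  have key : ∀ v v' : X, (1 : V) ≤ a.hom v' v → a.hom v x ≤ a.hom v' x := fun v v' hvv =>
    calc a.hom v x = 1 * a.hom v x := (one_mul _).symm
      _ ≤ a.hom v' v * a.hom v x := mul_mono_left' hvv _
      _ ≤ a.hom v' x := a.comp _ _ _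
  exact le_antisymm (key u u' h2) (key u' u h1)

/-- `Sup^Φ` computes the colimit formula. -/
theorem sup_hom' (Φ : DistClass V) (hΦ : DistAx Φ) {X : Type u} (a : VCatStr V X)
    (SX : PhiCarrier Φ a → X) (hSX : IsVFunctor (phiCat Φ a) a SX)
    (hadj₁ : ∀ ψ, (1 : V) ≤ (phiCat Φ a).hom ψ (yPhi Φ hΦ a (SX ψ)))
    (hinv : ∀ x, SX (yPhi Φ hΦ a x) = x)
    (ψ : PhiCarrier Φ a) (x : X) :
    a.hom (SX ψ) x = ⨅ x', qhom (ψ.1 x') (a.hom x' x) := by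
  apply le_antisymm
  · refine le_iInf fun x' => le_qhom_iff.mpr ?_
    have h2 : (1 : V) ≤ ⨅ x'', qhom (ψ.1 x'') (a.hom x'' (SX ψ)) := hadj₁ ψ
    have h1 : ψ.1 x' ≤ a.hom x' (SX ψ) :=
      calc ψ.1 x' = ψ.1 x' * 1 := (mul_one _).symm
        _ ≤ ψ.1 x' * qhom (ψ.1 x') (a.hom x' (SX ψ)) :=
            mul_mono_right' _ (le_trans h2 (iInf_le _ x'))
        _ ≤ a.hom x' (SX ψ) := qhom_mul_le' _ _
    exact le_trans (mul_mono_left' h1 _) (a.comp _ _ _)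
  · have h := hSX ψ (yPhi Φ hΦ a x)
    rw [hinv x] at h
    exact h

/-- The underlying function of the colimit weight presheaf. -/
def cwFun {X Y' Z : Type u} (a : VCatStr V X) (φ : Y' → Z → V) (h : Y' → X) (z : Z) :
    X → V :=
  fun x => ⨆ y', a.hom x (h y') * φ y' z

theorem cw_presheaf {X Y' Z : Type u} (a : VCatStr V X) (b' : VCatStr V Y')
    (φ : Y' → Z → V) (h : Y' → X) (z : Z) :
    IsPresheaf a (cwFun a φ h z) := by
  intro x' x
  rw [cwFun, mul_iSup']
  refine iSup_le fun y' => le_trans ?_ (le_iSup _ y')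
  calc a.hom x' x * (a.hom x (h y') * φ y' z)
      = (a.hom x' x * a.hom x (h y')) * φ y' z := (mul_assoc _ _ _).symm
    _ ≤ a.hom x' (h y') * φ y' z := mul_mono_left' (a.comp _ _ _) _

theorem cw_dist {X Y' Z : Type u} (a : VCatStr V X) (b' : VCatStr V Y') (c : VCatStr V Z)
    (φ : Y' → Z → V) (h : Y' → X) (hφd : IsDist b' c φ) :
    IsDist a c (fun x z => cwFun a φ h z x) := by
  constructor
  · intro x' x z
    exact cw_presheaf a b' φ h z x' x
  · intro x z z'
    show cwFun a φ h z x * c.hom z z' ≤ cwFun a φ h z' x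
    rw [cwFun, iSup_mul']
    refine iSup_le fun y' => le_trans ?_ (le_iSup _ y')
    calc (a.hom x (h y') * φ y' z) * c.hom z z'
        = a.hom x (h y') * (φ y' z * c.hom z z') := mul_assoc _ _ _
      _ ≤ a.hom x (h y') * φ y' z' := mul_mono_right' _ (hφd.2 _ _ _)

theorem cw_inPhi (Φ : DistClass V) (hΦ : DistAx Φ) {X Y' Z : Type u} (a : VCatStr V X)
    (b' : VCatStr V Y') (c : VCatStr V Z) (φ : Y' → Z → V) (h : Y' → X)
    (hφd : IsDist b' c φ) (hφ : Φ b' c φ) (hh : IsVFunctor b' a h) (z : Z) :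
    InPhi Φ a (cwFun a φ h z) := by
  have hΨ : Φ a c (dComp φ (fCostar a h)) := hΦ.ax2_right b' a c φ h hφd hh hφ
  have hΨd : IsDist a c (dComp φ (fCostar a h)) := cw_dist a b' c φ h hφd
  have hz : IsVFunctor (unitCat V) c (fun _ => z) := fun _ _ => c.refl z
  have h2 := hΦ.ax2_left a (unitCat V) c (dComp φ (fCostar a h)) (fun _ => z) hΨd hz hΨ
  have heq : dComp (fCostar c (fun (_ : PUnit) => z)) (dComp φ (fCostar a h))
      = fun x (_ : PUnit) => cwFun a φ h z x := by
    funext x u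
    show (⨆ z', dComp φ (fCostar a h) x z' * c.hom z' z) = cwFun a φ h z x
    apply le_antisymm
    · exact iSup_le fun z' => hΨd.2 x z' z
    · calc cwFun a φ h z x = cwFun a φ h z x * 1 := (mul_one _).symm
        _ ≤ cwFun a φ h z x * c.hom z z := mul_mono_right' _ (c.refl z)
        _ ≤ ⨆ z', dComp φ (fCostar a h) x z' * c.hom z' z :=
            le_iSup (fun z' => dComp φ (fCostar a h) x z' * c.hom z' z) z
  rw [heq] at h2
  exact h2

/-- The colimit weight as an element of `ΦX`. -/
def cw (Φ : DistClass V) (hΦ : DistAx Φ) {X Y' Z : Type u} (a : VCatStr V X)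
    (b' : VCatStr V Y') (c : VCatStr V Z) (φ : Y' → Z → V) (h : Y' → X)
    (hφd : IsDist b' c φ) (hφ : Φ b' c φ) (hh : IsVFunctor b' a h) (z : Z) :
    PhiCarrier Φ a :=
  ⟨cwFun a φ h z, cw_presheaf a b' φ h z, cw_inPhi Φ hΦ a b' c φ h hφd hφ hh z⟩

/-- `f` between `Φ`-cocomplete categories is `Φ`-cocontinuous iff
`f ∘ Sup^Φ_X ≅ Sup^Φ_Y ∘ Φf`. -/
theorem stmt13 (Φ : DistClass V) (hΦ : DistAx Φ) {X Y : Type u}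
    (a : VCatStr V X) (b : VCatStr V Y) (f : X → Y) (hf : IsVFunctor a b f)
    (hXc : PhiCocomplete Φ a) (hYc : PhiCocomplete Φ b)
    (SX : PhiCarrier Φ a → X) (SY : PhiCarrier Φ b → Y)
    (hSX : IsVFunctor (phiCat Φ a) a SX) (hSY : IsVFunctor (phiCat Φ b) b SY)
    (hSXadj₁ : ∀ ψ, (1 : V) ≤ (phiCat Φ a).hom ψ (yPhi Φ hΦ a (SX ψ)))
    (hSXadj₂ : ∀ x, (1 : V) ≤ a.hom (SX (yPhi Φ hΦ a x)) x)
    (hSXinv : ∀ x, SX (yPhi Φ hΦ a x) = x)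
    (hSYadj₁ : ∀ ψ, (1 : V) ≤ (phiCat Φ b).hom ψ (yPhi Φ hΦ b (SY ψ)))
    (hSYadj₂ : ∀ y, (1 : V) ≤ b.hom (SY (yPhi Φ hΦ b y)) y)
    (hSYinv : ∀ y, SY (yPhi Φ hΦ b y) = y) :
    PhiCocontinuous Φ a b f ↔
      VEquiv b (f ∘ SX) (SY ∘ phiMap Φ hΦ a b f hf) := by
  -- `SY (Φf ψ)` computes the `ψ`-weighted colimit of `f`.
  have hSYcomp : ∀ (ψ : PhiCarrier Φ a) (y : Y),
      b.hom (SY (phiMap Φ hΦ a b f hf ψ)) y = ⨅ x, qhom (ψ.1 x) (b.hom (f x) y) := by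
    intro ψ y
    rw [sup_hom' Φ hΦ b SY hSY hSYadj₁ hSYinv]
    exact sandwich' (fun y' x => b.hom y' (f x)) ψ.1 (fun y' => b.hom y' y) f
      (fun x => b.refl (f x)) (fun y' x => b.comp y' (f x) y)
  constructor
  · intro hcc
    have hpt : ∀ (ψ : PhiCarrier Φ a) (y : Y),
        b.hom (f (SX ψ)) y = b.hom (SY (phiMap Φ hΦ a b f hf ψ)) y := by
      intro ψ y
      have hd : IsDist a (unitCat V) (fun x (_ : PUnit) => ψ.1 x) :=
        ⟨fun x' x _ => ψ.2.1 x' x, fun x _ _ => (mul_one _).le⟩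
      have hcol : IsColimit a (unitCat V) a (fun x _ => ψ.1 x) id (fun _ => SX ψ) :=
        fun _ x => sup_hom' Φ hΦ a SX hSX hSXadj₁ hSXinv ψ x
      have h2 := hcc a (unitCat V) (fun x _ => ψ.1 x) id (fun _ => SX ψ) hd ψ.2.2
        (fun x x' => le_rfl) (fun _ _ => a.refl _) hcol
      have h3 := h2 PUnit.unit y
      rw [hSYcomp ψ y]
      exact h3
    constructor
    · intro ψ
      show (1 : V) ≤ b.hom (f (SX ψ)) (SY (phiMap Φ hΦ a b f hf ψ))
      rw [hpt ψ]
      exact b.refl _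
    · intro ψ
      show (1 : V) ≤ b.hom (SY (phiMap Φ hΦ a b f hf ψ)) (f (SX ψ))
      rw [← hpt ψ]
      exact b.refl _
  · intro hEq
    have hpt : ∀ (ψ : PhiCarrier Φ a) (y : Y),
        b.hom (f (SX ψ)) y = ⨅ x, qhom (ψ.1 x) (b.hom (f x) y) := by
      intro ψ y
      rw [← hSYcomp ψ y]
      exact hom_eq_of_equiv' b (hEq.1 ψ) (hEq.2 ψ) y
    intro Y' Z b' c φ h g hφd hφ hh hg hcol
    intro z y
    set Ψ : PhiCarrier Φ a := cw Φ hΦ a b' c φ h hφd hφ hh z with hΨdef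
    have hgS : ∀ x, a.hom (g z) x = a.hom (SX Ψ) x := by
      intro x
      rw [sup_hom' Φ hΦ a SX hSX hSXadj₁ hSXinv Ψ x, hcol z x]
      exact (sandwich' (fun x' y' => a.hom x' (h y')) (fun y' => φ y' z)
        (fun x' => a.hom x' x) h (fun y' => a.refl (h y'))
        (fun x' y' => a.comp x' (h y') x)).symm
    have h1 : (1 : V) ≤ a.hom (g z) (SX Ψ) := by
      rw [hgS (SX Ψ)]; exact a.refl _
    have h2 : (1 : V) ≤ a.hom (SX Ψ) (g z) := by
      rw [← hgS (g z)]; exact a.refl _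
    have hb1 : (1 : V) ≤ b.hom (f (g z)) (f (SX Ψ)) := le_trans h1 (hf _ _)
    have hb2 : (1 : V) ≤ b.hom (f (SX Ψ)) (f (g z)) := le_trans h2 (hf _ _)
    show b.hom (f (g z)) y = ⨅ y', qhom (φ y' z) (b.hom (f (h y')) y)
    calc b.hom (f (g z)) y = b.hom (f (SX Ψ)) y := hom_eq_of_equiv' b hb1 hb2 y
      _ = ⨅ x, qhom (Ψ.1 x) (b.hom (f x) y) := hpt Ψ y
      _ = ⨅ y', qhom (φ y' z) (b.hom (f (h y')) y) :=
          sandwich' (fun x y' => a.hom x (h y')) (fun y' => φ y' z)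
            (fun x => b.hom (f x) y) h (fun y' => a.refl (h y'))
            (fun x y' => le_trans (mul_mono_left' (hf x (h y')) _) (b.comp _ _ _))
end
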